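/- arXiv:2307.06590 — 3 statements merged into one kernel-verified Lean document; each statement's English description precedes it below -/
import Mathlib

section
/- Let N, M, K be positive integers with M + K ≤ N and K < N, and let H ~ Hypergeometric(N, M, K) (the size of the intersection of a uniformly random K-subset of [N] with a fixed M-subset). Then ℙ[H ≥ 1] ≤ e·K·M/(N−K) · exp(K²/N). -/
/-- Telescoping bound: removing `M` from `N` decreases `choose` by at most
`M * (N-1).choose (K-1)`. -/
lemma hyp_aux_choose (N K : ℕ) :
    ∀ M, M ≤ N → N.choose K ≤ (N - M).choose K + M * (N - 1).choose (K - 1) := by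
  intro M
  induction M with
  | zero => simp
  | succ m ih =>
    intro h
    have hm : m ≤ N := by omega
    have h1 : N - m = (N - m - 1) + 1 := by omega
    rcases Nat.eq_zero_or_pos K with hK0 | hK
    · subst hK0; simp
    obtain ⟨k, hk⟩ : ∃ k, K = k + 1 := ⟨K - 1, by omega⟩
    obtain ⟨n, hn⟩ : ∃ n, N - m = n + 1 := ⟨N - m - 1, by omega⟩
    have hn' : n = N - m - 1 := by omega
    have pascal : (N - m).choose K = (N - m - 1).choose (K - 1) + (N - m - 1).choose K := by
      rw [hn, hk, Nat.choose_succ_succ, hn']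
      simp [Nat.succ_eq_add_one]
    have hmono : (N - m - 1).choose (K - 1) ≤ (N - 1).choose (K - 1) :=
      Nat.choose_le_choose _ (by omega)
    have := ih hm
    have hsub : N - (m + 1) = N - m - 1 := by omega
    rw [hsub]
    calc N.choose K ≤ (N - m).choose K + m * (N - 1).choose (K - 1) := ih hm
      _ = (N - m - 1).choose (K - 1) + (N - m - 1).choose K
            + m * (N - 1).choose (K - 1) := by rw [pascal]
      _ ≤ (N - 1).choose (K - 1) + (N - m - 1).choose K
            + m * (N - 1).choose (K - 1) := by omega
      _ = (N - m - 1).choose K + (m + 1) * (N - 1).choose (K - 1) := by ring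
  
/-- Vandermonde split: the tail sum in ℕ. -/
lemma hyp_vandermonde (N M K : ℕ) (hMN : M ≤ N) :
    (N - M).choose K + ∑ k ∈ Finset.Icc 1 K, M.choose k * (N - M).choose (K - k)
      = N.choose K := by
  have hN : N = M + (N - M) := by omega
  have := Nat.add_choose_eq M (N - M) K
  rw [Finset.Nat.sum_antidiagonal_eq_sum_range_succ_mk] at this
  have hIcc : ∑ k ∈ Finset.Icc 1 K, M.choose k * (N - M).choose (K - k)
      = ∑ k ∈ Finset.range K, M.choose (1 + k) * (N - M).choose (K - (1 + k)) := by
    rw [← Finset.Ico_add_one_right_eq_Icc, Finset.sum_Ico_eq_sum_range]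
    simp
  rw [hIcc]
  have hsplit : ∑ i ∈ Finset.range (K + 1), M.choose i * (N - M).choose (K - i)
      = M.choose 0 * (N - M).choose (K - 0)
        + ∑ i ∈ Finset.range K, M.choose (i + 1) * (N - M).choose (K - (i + 1)) := by
    rw [Finset.sum_range_succ' (fun i => M.choose i * (N - M).choose (K - i)) K]
    ring
  rw [hN] at *
  simp only [Nat.add_sub_cancel_left] at *
  rw [this, hsplit]
  simp [Nat.add_comm 1]

/-- Hypergeometric tail bound: for `H ~ Hypergeometric(N, M, K)`,
`ℙ[H ≥ 1] ≤ e·K·M/(N−K) · exp(K²/N)` (when `KM/(N−K) ≤ 1`). -/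
theorem hypergeometric_ge_one_bound (N M K : ℕ)
    (hM : 0 < M) (hK : 0 < K) (hMK : M + K ≤ N) (hKN : K < N)
    (hsmall : (K : ℝ) * M / ((N : ℝ) - K) ≤ 1) :
    (∑ k ∈ Finset.Icc 1 K,
        (M.choose k : ℝ) * ((N - M).choose (K - k) : ℝ) / (N.choose K : ℝ))
      ≤ Real.exp 1 * K * M / ((N : ℝ) - K) * Real.exp ((K : ℝ) ^ 2 / N) := by
  have hMN : M ≤ N := by omega
  have hNpos : (0 : ℝ) < N := by
    have : 0 < N := by omega
    exact_mod_cast this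
  have hNKpos : (0 : ℝ) < (N : ℝ) - K := by
    have : (K : ℝ) < N := by exact_mod_cast hKN
    linarith
  have hCpos : (0 : ℝ) < (N.choose K : ℝ) := by
    exact_mod_cast Nat.choose_pos (le_of_lt hKN)
  -- step 1: the tail sum in ℕ is at most M * (N-1).choose (K-1)
  have hnat : ∑ k ∈ Finset.Icc 1 K, M.choose k * (N - M).choose (K - k)
      ≤ M * (N - 1).choose (K - 1) := by
    have h1 := hyp_aux_choose N K M hMN
    have h2 := hyp_vandermonde N M K hMN
    omega
  -- step 2: real sum equals cast of ℕ sum divided by C(N,K)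
  have hsum : (∑ k ∈ Finset.Icc 1 K,
        (M.choose k : ℝ) * ((N - M).choose (K - k) : ℝ) / (N.choose K : ℝ))
      = ((∑ k ∈ Finset.Icc 1 K, M.choose k * (N - M).choose (K - k) : ℕ) : ℝ)
          / (N.choose K : ℝ) := by
    rw [← Finset.sum_div]
    push_cast
    ring
  -- step 3: N * (N-1).choose (K-1) = K * N.choose K
  have hid : (N : ℕ) * (N - 1).choose (K - 1) = N.choose K * K := by
    have := Nat.add_one_mul_choose_eq (N - 1) (K - 1)
    have hN1 : N - 1 + 1 = N := by omega
    have hK1 : K - 1 + 1 = K := by omega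
    rwa [hN1, hK1] at this
  have hbound : (∑ k ∈ Finset.Icc 1 K,
        (M.choose k : ℝ) * ((N - M).choose (K - k) : ℝ) / (N.choose K : ℝ))
      ≤ (K : ℝ) * M / N := by
    rw [hsum, div_le_div_iff₀ hCpos hNpos]
    have h1 : ((∑ k ∈ Finset.Icc 1 K, M.choose k * (N - M).choose (K - k) : ℕ) : ℝ)
        ≤ (M : ℝ) * ((N - 1).choose (K - 1) : ℝ) := by exact_mod_cast hnat
    have h2 : (N : ℝ) * ((N - 1).choose (K - 1) : ℝ) = (N.choose K : ℝ) * K := by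
      exact_mod_cast hid
    nlinarith [hNpos, (Nat.cast_nonneg M : (0:ℝ) ≤ (M:ℝ))]
  -- step 4: conclude
  have hKM : (K : ℝ) * M / N ≤ (K : ℝ) * M / ((N : ℝ) - K) := by
    gcongr
    linarith
  have hexp : (1 : ℝ) ≤ Real.exp 1 * Real.exp ((K : ℝ) ^ 2 / N) := by
    rw [← Real.exp_add]
    have : (0 : ℝ) ≤ 1 + (K : ℝ) ^ 2 / N := by positivity
    linarith [Real.add_one_le_exp (1 + (K : ℝ) ^ 2 / N)]
  have hfinal : (K : ℝ) * M / ((N : ℝ) - K)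
      ≤ Real.exp 1 * K * M / ((N : ℝ) - K) * Real.exp ((K : ℝ) ^ 2 / N) := by
    have hnn : (0 : ℝ) ≤ (K : ℝ) * M / ((N : ℝ) - K) := by positivity
    calc (K : ℝ) * M / ((N : ℝ) - K)
        = (K : ℝ) * M / ((N : ℝ) - K) * 1 := by ring
      _ ≤ (K : ℝ) * M / ((N : ℝ) - K) * (Real.exp 1 * Real.exp ((K : ℝ) ^ 2 / N)) :=
          mul_le_mul_of_nonneg_left hexp hnn
      _ = Real.exp 1 * K * M / ((N : ℝ) - K) * Real.exp ((K : ℝ) ^ 2 / N) := by ring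
  linarith
end

section
/- Let N, M, K be positive integers with M + K ≤ N. For H ~ Hypergeometric(N, M, K), ℙ[H ≥ 3] ≤ (1 − K/N)^{−K} · (KM/(N−K))³ when KM/(N−K) ≤ 1. -/
open Finset Nat

private lemma aux_pow_le_descFactorial (N K k : ℕ) (hk : k ≤ K) :
    (N - K) ^ k ≤ N.descFactorial k := by
  rw [Nat.descFactorial_eq_prod_range]
  calc (N - K) ^ k = ∏ _i ∈ range k, (N - K) := by rw [prod_const, card_range]
    _ ≤ ∏ i ∈ range k, (N - i) := by
        refine Finset.prod_le_prod' fun i hi => ?_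
        exact Nat.sub_le_sub_left (by have := mem_range.1 hi; omega) N

private lemma aux_nat (N M K k : ℕ) (hk : k ≤ K) (hMK : M + K ≤ N) :
    M.choose k * (N - M).choose (K - k) * ((N - K) ^ k * k !) ≤
      K ^ k * M ^ k * N.choose K := by
  have hKN : K ≤ N := by omega
  rcases lt_or_ge M k with hkM | hkM
  · rw [Nat.choose_eq_zero_of_lt hkM]; simp
  · refine Nat.le_of_mul_le_mul_right ?_ (Nat.factorial_pos K)
    have e1 : M.descFactorial k = k ! * M.choose k :=
      Nat.descFactorial_eq_factorial_mul_choose _ _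
    have e2 : (N - M).descFactorial (K - k) = (K - k)! * (N - M).choose (K - k) :=
      Nat.descFactorial_eq_factorial_mul_choose _ _
    have e3 : N.descFactorial K = K ! * N.choose K :=
      Nat.descFactorial_eq_factorial_mul_choose _ _
    have e4 : K.descFactorial k = k ! * K.choose k :=
      Nat.descFactorial_eq_factorial_mul_choose _ _
    have e5 : K.choose k * k ! * (K - k)! = K ! :=
      Nat.choose_mul_factorial_mul_factorial hk
    have hd : (N - k).descFactorial (K - k) * N.descFactorial k = N.descFactorial K :=
      Nat.descFactorial_mul_descFactorial hk
    have hmono : (N - M).descFactorial (K - k) ≤ (N - k).descFactorial (K - k) :=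
      Nat.descFactorial_le _ (by omega)
    have hpow : (N - K) ^ k ≤ N.descFactorial k := aux_pow_le_descFactorial N K k hk
    have h2 : M.descFactorial k ≤ M ^ k := Nat.descFactorial_le_pow _ _
    have h4 : K.descFactorial k ≤ K ^ k := Nat.descFactorial_le_pow _ _
    calc M.choose k * (N - M).choose (K - k) * ((N - K) ^ k * k !) * K !
        = M.descFactorial k * (N - M).descFactorial (K - k) * (N - K) ^ k
            * K.descFactorial k := by
          rw [e1, e2, e4, ← e5]; ring
      _ ≤ M ^ k * (N - k).descFactorial (K - k) * N.descFactorial k * K ^ k := by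
          gcongr
      _ = M ^ k * K ^ k * ((N - k).descFactorial (K - k) * N.descFactorial k) := by ring
      _ = K ^ k * M ^ k * N.choose K * K ! := by rw [hd, e3]; ring

private lemma aux_two_pow : ∀ k : ℕ, 2 ^ k ≤ 2 * k !
  | 0 => by norm_num
  | 1 => by norm_num
  | (n + 2) => by
    have ih := aux_two_pow (n + 1)
    rw [pow_succ, Nat.factorial_succ]
    have hf : 0 < (n + 1)! := Nat.factorial_pos _
    calc 2 ^ (n + 1) * 2 ≤ 2 * (n + 1)! * 2 := by gcongr
      _ ≤ 2 * ((n + 2) * (n + 1)!) := by nlinarith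

private lemma aux_geo : ∀ K : ℕ, 2 ≤ K →
    ∑ k ∈ Finset.Icc 3 K, ((1 : ℝ) / 2) ^ k = 1 / 4 - (1 / 2) ^ K := by
  intro K hK
  induction K, hK using Nat.le_induction with
  | base => rw [Finset.Icc_eq_empty (by omega)]; norm_num
  | succ n hn ih =>
    rw [Finset.sum_Icc_succ_top (by omega : 3 ≤ n + 1), ih]
    ring

/-- Hypergeometric tail bound: for `H ~ Hypergeometric(N, M, K)`,
`ℙ[H ≥ 3] ≤ (1 − K/N)^{−K} · (KM/(N−K))³` when `KM/(N−K) ≤ 1`. -/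
theorem hypergeometric_ge_three_bound (N M K : ℕ)
    (hM : 0 < M) (hK : 0 < K) (hMK : M + K ≤ N)
    (hsmall : (K : ℝ) * M / ((N : ℝ) - K) ≤ 1) :
    (∑ k ∈ Finset.Icc 3 K,
        (M.choose k : ℝ) * ((N - M).choose (K - k) : ℝ) / (N.choose K : ℝ))
      ≤ ((1 - (K : ℝ) / N) ^ K)⁻¹ * ((K : ℝ) * M / ((N : ℝ) - K)) ^ 3 := by
  have hKN : K ≤ N := by omega
  have hKltN : K < N := by omega
  have hN0 : (0 : ℝ) < N := by exact_mod_cast (show 0 < N by omega)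
  have hNK : (0 : ℝ) < (N : ℝ) - K := by
    have : (K : ℝ) < N := by exact_mod_cast hKltN
    linarith
  set x : ℝ := (K : ℝ) * M / ((N : ℝ) - K) with hx
  have hx0 : 0 ≤ x := by positivity
  have hCN : (0 : ℝ) < (N.choose K : ℝ) := by
    exact_mod_cast Nat.choose_pos hKN
  -- per-term bound
  have hterm : ∀ k ∈ Finset.Icc 3 K,
      (M.choose k : ℝ) * ((N - M).choose (K - k) : ℝ) / (N.choose K : ℝ)
        ≤ x ^ k / (k ! : ℝ) := by
    intro k hk
    obtain ⟨hk3, hkK⟩ := Finset.mem_Icc.1 hk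
    have hx' : x ^ k / (k ! : ℝ)
        = ((K : ℝ) * M) ^ k / (((N : ℝ) - K) ^ k * (k ! : ℝ)) := by
      rw [hx, div_pow, div_div]
    rw [hx']
    rw [div_le_div_iff₀ hCN (mul_pos (pow_pos hNK k) (by exact_mod_cast k.factorial_pos))]
    have := aux_nat N M K k hkK hMK
    have hcast : ((N - K : ℕ) : ℝ) = (N : ℝ) - K := Nat.cast_sub hKN
    rw [mul_pow, ← hcast]
    exact_mod_cast this
  have h2 : ∀ k ∈ Finset.Icc 3 K,
      x ^ k / (k ! : ℝ) ≤ x ^ 3 * (2 * (1 / 2 : ℝ) ^ k) := by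
    intro k hk
    obtain ⟨hk3, hkK⟩ := Finset.mem_Icc.1 hk
    have hxk : x ^ k ≤ x ^ 3 := pow_le_pow_of_le_one hx0 hsmall hk3
    have hfac : (1 : ℝ) / (k ! : ℝ) ≤ 2 * (1 / 2) ^ k := by
      have hkpos : (0 : ℝ) < (k ! : ℝ) := by exact_mod_cast k.factorial_pos
      have h2k : (0 : ℝ) < (2 : ℝ) ^ k := by positivity
      have key : (1 : ℝ) / (k ! : ℝ) ≤ 2 / 2 ^ k := by
        rw [div_le_div_iff₀ hkpos h2k, one_mul]
        exact_mod_cast aux_two_pow k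
      calc (1 : ℝ) / (k ! : ℝ) ≤ 2 / 2 ^ k := key
        _ = 2 * (1 / 2) ^ k := by rw [one_div, inv_pow, div_eq_mul_inv]
    calc x ^ k / (k ! : ℝ) = x ^ k * (1 / (k ! : ℝ)) := by ring
      _ ≤ x ^ 3 * (2 * (1 / 2) ^ k) := by
          apply mul_le_mul hxk hfac (by positivity) (by positivity)
  have hgeo : ∑ k ∈ Finset.Icc 3 K, ((1 : ℝ) / 2) ^ k ≤ 1 / 4 := by
    rcases lt_or_ge K 2 with h | h
    · rw [Finset.Icc_eq_empty (by omega)]; norm_num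
    · rw [aux_geo K h]
      have : (0 : ℝ) < (1 / 2) ^ K := by positivity
      linarith
  have hinv : (1 : ℝ) ≤ ((1 - (K : ℝ) / N) ^ K)⁻¹ := by
    have hb0 : (0 : ℝ) < 1 - (K : ℝ) / N := by
      rw [sub_pos, div_lt_one hN0]
      exact_mod_cast hKltN
    have hb1 : (1 : ℝ) - (K : ℝ) / N ≤ 1 := by
      have : (0 : ℝ) ≤ (K : ℝ) / N := by positivity
      linarith
    exact (one_le_inv₀ (by positivity)).mpr (pow_le_one₀ hb0.le hb1)
  calc (∑ k ∈ Finset.Icc 3 K,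
        (M.choose k : ℝ) * ((N - M).choose (K - k) : ℝ) / (N.choose K : ℝ))
      ≤ ∑ k ∈ Finset.Icc 3 K, x ^ k / (k ! : ℝ) := Finset.sum_le_sum hterm
    _ ≤ ∑ k ∈ Finset.Icc 3 K, x ^ 3 * (2 * (1 / 2 : ℝ) ^ k) := Finset.sum_le_sum h2
    _ = x ^ 3 * (2 * ∑ k ∈ Finset.Icc 3 K, (1 / 2 : ℝ) ^ k) := by
        rw [← Finset.mul_sum, ← Finset.mul_sum]
    _ ≤ x ^ 3 * (2 * (1 / 4)) := by
        have hx3 : (0 : ℝ) ≤ x ^ 3 := by positivity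
        gcongr
    _ ≤ 1 * x ^ 3 := by nlinarith [pow_nonneg hx0 3]
    _ ≤ ((1 - (K : ℝ) / N) ^ K)⁻¹ * x ^ 3 := by
        apply mul_le_mul_of_nonneg_right hinv (by positivity)
end

section
/- Let D ≥ 2 and N ≥ 1 be integers, let T be the complete D-ary tree with N+1 generations with leaf set L (|L| = D^N), and let (S_v)_{v ∈ V(T)} be events in a probability space, together with a filtration F₀ ⊆ F₁ ⊆ ... ⊆ F_N such that for each internal vertex v at depth i with children v₁,...,v_D: the events S(v₁),...,S(v_D) are conditionally independent given F_i, have equal conditional probabilities given F_i, and S(v) = ∩_{k=1}^D S(v_k), where S(u) for a vertex u denotes the intersection of events over leaves descending from u. Then ℙ[∩_{v ∈ L} S_v] ≥ (ℙ[S_v₀])^{D^N} for any fixed leaf v₀, whenever ℙ[S_v] is the same for all leaves v. -/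
open MeasureTheory ProbabilityTheory
open scoped ENNReal

/-- Iterated Jensen inequality for the branching-OGP argument.  Leaves of the
complete `D`-ary tree with `N + 1` generations are encoded as `Fin N → Fin D`;
`T i w` is the intersection of the leaf events `S v` over all leaves `v`
agreeing with `w` on the first `i` coordinates.  If at every depth the `D`
child events are conditionally independent given `F i` with equal conditional
probabilities, and all leaf events have the same probability, then
`ℙ[⋂_v S v] ≥ (ℙ[S v₀])^(D^N)`. -/
theorem branching_jensen
    (Ω : Type*) [MeasureSpace Ω] [IsProbabilityMeasure (ℙ : Measure Ω)]
    (D N : ℕ) (hD : 2 ≤ D) (hN : 1 ≤ N)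
    (F : ℕ → MeasurableSpace Ω)
    (hFle : ∀ i, F i ≤ (inferInstance : MeasurableSpace Ω))
    (hFmono : Monotone F)
    (S : (Fin N → Fin D) → Set Ω) (hSmeas : ∀ v, MeasurableSet (S v))
    (T : ℕ → (Fin N → Fin D) → Set Ω)
    (hTN : ∀ w, T N w = S w)
    (hTdef : ∀ i (hi : i < N) (w : Fin N → Fin D),
      T i w = ⋂ k : Fin D, T (i + 1) (Function.update w ⟨i, hi⟩ k))
    (hTagree : ∀ i (w w' : Fin N → Fin D),
      (∀ j : Fin N, (j : ℕ) < i → w j = w' j) → T i w = T i w')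
    (hcondindep : ∀ i (hi : i < N) (w : Fin N → Fin D),
      (ℙ[(T i w).indicator (fun _ => (1 : ℝ)) | F i])
        =ᵐ[ℙ] fun ω => ∏ k : Fin D,
          (ℙ[(T (i + 1) (Function.update w ⟨i, hi⟩ k)).indicator (fun _ => (1 : ℝ)) | F i]) ω)
    (heqcond : ∀ i (hi : i < N) (w : Fin N → Fin D) (k k' : Fin D),
      (ℙ[(T (i + 1) (Function.update w ⟨i, hi⟩ k)).indicator (fun _ => (1 : ℝ)) | F i])
        =ᵐ[ℙ]
      (ℙ[(T (i + 1) (Function.update w ⟨i, hi⟩ k')).indicator (fun _ => (1 : ℝ)) | F i]))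
    (heqleaf : ∀ v v' : Fin N → Fin D, ℙ (S v) = ℙ (S v'))
    (v₀ : Fin N → Fin D) :
    (ℙ (S v₀)) ^ (D ^ N) ≤ ℙ (⋂ v, S v) := by
  -- Structural description of `T i w` as an intersection of leaf events.
  have hstruct : ∀ k i, i + k = N → ∀ w, T i w =
      ⋂ v ∈ {v : Fin N → Fin D | ∀ j : Fin N, (j : ℕ) < i → v j = w j}, S v := by
    intro k
    induction k with
    | zero =>
      intro i hi w
      subst hi
      simp only [Nat.add_zero] at *
      rw [hTN]
      ext x
      simp only [Set.mem_iInter, Set.mem_setOf_eq]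
      constructor
      · intro hx v hv
        have : v = w := funext fun j => hv j j.isLt
        rwa [this]
      · intro h
        exact h w fun j _ => rfl
    | succ k ih =>
      intro i hik w
      have hi : i < N := by omega
      rw [hTdef i hi w]
      ext x
      simp only [Set.mem_iInter, Set.mem_setOf_eq]
      constructor
      · intro hx v hv
        have hx' := ih (i + 1) (by omega) (Function.update w ⟨i, hi⟩ (v ⟨i, hi⟩))
        have := hx (v ⟨i, hi⟩)
        rw [hx'] at this
        simp only [Set.mem_iInter, Set.mem_setOf_eq] at this
        refine this v fun j hj => ?_
        rcases Nat.lt_or_ge (j : ℕ) i with h | h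
        · rw [Function.update_of_ne (by
            intro hje; rw [hje] at h; exact absurd h (by simp)) _ w]
          exact hv j h
        · have hji : (j : ℕ) = i := by omega
          have : j = ⟨i, hi⟩ := Fin.ext hji
          rw [this, Function.update_self]
      · intro h k'
        rw [ih (i + 1) (by omega) _]
        simp only [Set.mem_iInter, Set.mem_setOf_eq]
        intro v hv
        refine h v fun j hj => ?_
        have := hv j (by omega)
        rwa [Function.update_of_ne (by
          intro hje; rw [hje] at hj; simp at hj) _ w] at this
  -- `T i w` is measurable.
  have hTmeas : ∀ i, i ≤ N → ∀ w, MeasurableSet (T i w) := by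
    intro i hi w
    rw [hstruct (N - i) i (by omega) w]
    exact MeasurableSet.biInter (Set.to_countable _) fun v _ => hSmeas v
  -- `T 0 v₀` is the full intersection.
  have hT0 : T 0 v₀ = ⋂ v, S v := by
    rw [hstruct N 0 (by omega) v₀]
    ext x
    simp
  -- key one-step inequality
  have hstep : ∀ i, i < N →
      (ℙ (T (i + 1) v₀)).toReal ^ D ≤ (ℙ (T i v₀)).toReal := by
    intro i hi
    set f : Ω → ℝ := ℙ[(T (i + 1) v₀).indicator (fun _ => (1 : ℝ)) | F i] with hf
    have hupd : Function.update v₀ (⟨i, hi⟩ : Fin N) (v₀ ⟨i, hi⟩) = v₀ :=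
      Function.update_eq_self _ _
    -- the product of the child condexps is a.e. `f ^ D`
    have hprod : (fun ω => ∏ k : Fin D,
        (ℙ[(T (i + 1) (Function.update v₀ ⟨i, hi⟩ k)).indicator (fun _ => (1 : ℝ)) | F i]) ω)
        =ᵐ[ℙ] fun ω => f ω ^ D := by
      have hall : ∀ᵐ ω ∂ℙ, ∀ k : Fin D,
          (ℙ[(T (i + 1) (Function.update v₀ ⟨i, hi⟩ k)).indicator (fun _ => (1 : ℝ)) | F i]) ω
            = f ω := by
        rw [ae_all_iff]
        intro k
        have := heqcond i hi v₀ k (v₀ ⟨i, hi⟩)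
        rw [hupd] at this
        exact this
      filter_upwards [hall] with ω hω
      simp [hω, Finset.prod_const, Finset.card_univ]
    have hTi : ℙ[(T i v₀).indicator (fun _ => (1 : ℝ)) | F i] =ᵐ[ℙ] fun ω => f ω ^ D :=
      (hcondindep i hi v₀).trans hprod
    have hmeas1 : MeasurableSet (T (i + 1) v₀) := hTmeas (i + 1) (by omega) v₀
    have hmeasi : MeasurableSet (T i v₀) := hTmeas i (by omega) v₀
    have hint1 : Integrable ((T (i + 1) v₀).indicator (fun _ => (1 : ℝ))) ℙ :=
      (integrable_const (1 : ℝ)).indicator hmeas1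
    have hinti : Integrable ((T i v₀).indicator (fun _ => (1 : ℝ))) ℙ :=
      (integrable_const (1 : ℝ)).indicator hmeasi
    -- Jensen
    have h0 : (0 : Ω → ℝ) ≤ᵐ[ℙ] f :=
      condExp_nonneg (Filter.Eventually.of_forall fun ω =>
        Set.indicator_nonneg (fun _ _ => zero_le_one) ω)
    have hfnn : ∀ᵐ ω ∂ℙ, f ω ∈ Set.Ici (0 : ℝ) := h0.mono fun ω h => h
    have hgi : Integrable (fun ω => f ω ^ D) ℙ :=
      (integrable_condExp (f := (T i v₀).indicator (fun _ => (1 : ℝ)))).congr hTi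
    have hjensen : (∫ ω, f ω ∂ℙ) ^ D ≤ ∫ ω, f ω ^ D ∂ℙ :=
      (convexOn_pow D).map_integral_le (continuousOn_pow D) isClosed_Ici hfnn
        integrable_condExp hgi
    have h1 : ∫ ω, f ω ∂ℙ = (ℙ (T (i + 1) v₀)).toReal := by
      rw [hf, integral_condExp (hFle i)]
      rw [← measureReal_def]
      exact integral_indicator_one hmeas1
    have h2 : ∫ ω, f ω ^ D ∂ℙ = (ℙ (T i v₀)).toReal := by
      rw [← integral_congr_ae hTi, integral_condExp (hFle i)]
      rw [← measureReal_def]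
      exact integral_indicator_one hmeasi
    rw [← h1, ← h2]
    exact hjensen
  -- downward induction
  have hmain : ∀ k i, i + k = N →
      (ℙ (S v₀)).toReal ^ (D ^ k) ≤ (ℙ (T i v₀)).toReal := by
    intro k
    induction k with
    | zero =>
      intro i hik
      subst hik
      simp only [pow_zero, pow_one]
      rw [show T i v₀ = S v₀ from by simpa using hTN v₀]
    | succ k ih =>
      intro i hik
      have hi : i < N := by omega
      calc (ℙ (S v₀)).toReal ^ (D ^ (k + 1))
          = ((ℙ (S v₀)).toReal ^ (D ^ k)) ^ D := by
            rw [← pow_mul, pow_succ]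
        _ ≤ (ℙ (T (i + 1) v₀)).toReal ^ D :=
            pow_le_pow_left₀ (pow_nonneg ENNReal.toReal_nonneg _)
              (ih (i + 1) (by omega)) D
        _ ≤ (ℙ (T i v₀)).toReal := hstep i hi
  have hfinal := hmain N 0 (by omega)
  rw [hT0] at hfinal
  rw [← ENNReal.toReal_le_toReal (ENNReal.pow_ne_top (measure_ne_top _ _)) (measure_ne_top _ _),
    ENNReal.toReal_pow]
  exact hfinal
end
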